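/- arXiv:2105.11092 — 2 statements merged into one kernel-verified Lean document; each statement's English description precedes it below -/
import Mathlib

section
/- The Kalman filter posterior covariance, written in the Joseph-free form P̃⁺(P) = P − P C^T (C P C^T + D D^T)⁻¹ C P, is monotone in the Loewner order: if 0 ⪯ P' ⪯ P, then P̃⁺(P') ⪯ P̃⁺(P), assuming D D^T is positive definite. -/
open Matrix

/-- Abstract matrix identity underlying monotonicity of the Kalman update. -/
lemma kalman_ring_key {N M : Type*} [Fintype N] [Fintype M]
    [DecidableEq N] [DecidableEq M]
    (P P' : Matrix N N ℝ) (C : Matrix M N ℝ) (Ct : Matrix N M ℝ)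
    (Rm S S' : Matrix M M ℝ)
    (hS1 : S * (C * P * Ct + Rm) = 1) (hS2 : (C * P * Ct + Rm) * S = 1)
    (hS'1 : S' * (C * P' * Ct + Rm) = 1) (hS'2 : (C * P' * Ct + Rm) * S' = 1) :
    (P - P * Ct * S * C * P) - (P' - P' * Ct * S' * C * P')
      = (1 - P * Ct * S * C) * (P - P') * (1 - Ct * (S * C * P))
        + (P * Ct * S - P' * Ct * S') * (C * P' * Ct + Rm)
            * (S * C * P - S' * C * P') := by
  have h1 : (C * P' * Ct + Rm) * (S' * C * P') = C * P' := by
    rw [← Matrix.mul_assoc, ← Matrix.mul_assoc, hS'2, Matrix.one_mul]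
  have h2 : P' * Ct * S' * (C * P' * Ct + Rm) = P' * Ct := by
    rw [Matrix.mul_assoc, hS'1, Matrix.mul_one]
  have h3 : P * Ct * (S * (C * P * Ct + Rm)) = P * Ct := by
    rw [hS1, Matrix.mul_one]
  symm
  calc (1 - P * Ct * S * C) * (P - P') * (1 - Ct * (S * C * P))
        + (P * Ct * S - P' * Ct * S') * (C * P' * Ct + Rm)
            * (S * C * P - S' * C * P')
      = (P - P') - P * Ct * S * (C * P) + P * Ct * S * (C * P')
          - (P - P') * (Ct * (S * C * P))
          + P * Ct * (S * (C * P * Ct - C * P' * Ct + (C * P' * Ct + Rm)))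
              * (S * C * P)
          - P * Ct * S * ((C * P' * Ct + Rm) * (S' * C * P'))
          - (P' * Ct * S' * (C * P' * Ct + Rm)) * (S * C * P)
          + (P' * Ct * S' * (C * P' * Ct + Rm)) * (S' * C * P') := by
        simp only [Matrix.sub_mul, Matrix.mul_sub, Matrix.add_mul,
          Matrix.mul_add, Matrix.one_mul, Matrix.mul_one, Matrix.mul_assoc]
        abel
    _ = (P - P') - P * Ct * S * (C * P) + P * Ct * S * (C * P')
          - (P - P') * (Ct * (S * C * P))
          + P * Ct * (S * (C * P * Ct + Rm)) * (S * C * P)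
          - P * Ct * S * (C * P')
          - (P' * Ct) * (S * C * P)
          + (P' * Ct) * (S' * C * P') := by
        rw [show C * P * Ct - C * P' * Ct + (C * P' * Ct + Rm)
              = C * P * Ct + Rm by abel, h1, h2]
    _ = (P - P') - P * Ct * S * (C * P) + P * Ct * S * (C * P')
          - (P - P') * (Ct * (S * C * P))
          + (P * Ct) * (S * C * P)
          - P * Ct * S * (C * P')
          - (P' * Ct) * (S * C * P)
          + (P' * Ct) * (S' * C * P') := by rw [h3]
    _ = (P - P * Ct * S * C * P) - (P' - P' * Ct * S' * C * P') := by
        simp only [Matrix.sub_mul, Matrix.mul_sub, Matrix.add_mul,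
          Matrix.mul_add, Matrix.one_mul, Matrix.mul_one, Matrix.mul_assoc]
        abel

/-- Monotonicity of the Kalman posterior covariance map
`P ↦ P − P Cᵀ (C P Cᵀ + D Dᵀ)⁻¹ C P` in the Loewner order. -/
theorem posterior_update_monotone {n m : ℕ}
    (C : Matrix (Fin m) (Fin n) ℝ) (D : Matrix (Fin m) (Fin m) ℝ)
    (hD : (D * Dᵀ).PosDef)
    (P P' : Matrix (Fin n) (Fin n) ℝ)
    (hP' : P'.PosSemidef) (hP : P.PosSemidef)
    (hle : (P - P').PosSemidef) :
    ((P - P * Cᵀ * (C * P * Cᵀ + D * Dᵀ)⁻¹ * C * P)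
      - (P' - P' * Cᵀ * (C * P' * Cᵀ + D * Dᵀ)⁻¹ * C * P')).PosSemidef := by
  have hCt : (Cᴴ : Matrix (Fin n) (Fin m) ℝ) = Cᵀ :=
    conjTranspose_eq_transpose_of_trivial C
  have hSg : (C * P * Cᵀ + D * Dᵀ).PosDef := by
    have := (hP.mul_mul_conjTranspose_same C)
    rw [hCt] at this
    exact Matrix.PosDef.posSemidef_add this hD
  have hSg' : (C * P' * Cᵀ + D * Dᵀ).PosDef := by
    have := (hP'.mul_mul_conjTranspose_same C)
    rw [hCt] at this
    exact Matrix.PosDef.posSemidef_add this hD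
  set Sg := C * P * Cᵀ + D * Dᵀ with hSgdef
  set Sg' := C * P' * Cᵀ + D * Dᵀ with hSg'def
  have hdet : IsUnit Sg.det := hSg.det_pos.ne'.isUnit
  have hdet' : IsUnit Sg'.det := hSg'.det_pos.ne'.isUnit
  have hS1 : Sg⁻¹ * Sg = 1 := Matrix.nonsing_inv_mul Sg hdet
  have hS2 : Sg * Sg⁻¹ = 1 := Matrix.mul_nonsing_inv Sg hdet
  have hS'1 : Sg'⁻¹ * Sg' = 1 := Matrix.nonsing_inv_mul Sg' hdet'
  have hS'2 : Sg' * Sg'⁻¹ = 1 := Matrix.mul_nonsing_inv Sg' hdet'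
  have hPt : Pᵀ = P := by
    have := hP.isHermitian.eq
    rwa [conjTranspose_eq_transpose_of_trivial] at this
  have hSgt : Sgᵀ = Sg := by
    have := hSg.isHermitian.eq
    rwa [conjTranspose_eq_transpose_of_trivial] at this
  have hSt : (Sg⁻¹)ᵀ = Sg⁻¹ := by rw [Matrix.transpose_nonsing_inv, hSgt]
  have key := kalman_ring_key P P' C Cᵀ (D * Dᵀ) Sg⁻¹ Sg'⁻¹
      (by rw [← hSgdef, hS1]) (by rw [← hSgdef, hS2])
      (by rw [← hSg'def, hS'1]) (by rw [← hSg'def, hS'2])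
  rw [key]
  have hpsd1 : ((1 - P * Cᵀ * Sg⁻¹ * C) * (P - P')
      * (1 - Cᵀ * (Sg⁻¹ * C * P))).PosSemidef := by
    have h := hle.mul_mul_conjTranspose_same (1 - P * Cᵀ * Sg⁻¹ * C)
    have he : (1 - P * Cᵀ * Sg⁻¹ * C)ᴴ = 1 - Cᵀ * (Sg⁻¹ * C * P) := by
      rw [conjTranspose_eq_transpose_of_trivial]
      rw [transpose_sub, transpose_one, transpose_mul, transpose_mul,
        transpose_mul, hSt, transpose_transpose, hPt]
      simp only [Matrix.mul_assoc]
    rwa [he] at h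
  have hpsd2 : ((P * Cᵀ * Sg⁻¹ - P' * Cᵀ * Sg'⁻¹) * Sg'
      * (Sg⁻¹ * C * P - Sg'⁻¹ * C * P')).PosSemidef := by
    have h := hSg'.posSemidef.mul_mul_conjTranspose_same
        (P * Cᵀ * Sg⁻¹ - P' * Cᵀ * Sg'⁻¹)
    have hP't : P'ᵀ = P' := by
      have := hP'.isHermitian.eq
      rwa [conjTranspose_eq_transpose_of_trivial] at this
    have hSg't : Sg'ᵀ = Sg' := by
      have := hSg'.isHermitian.eq
      rwa [conjTranspose_eq_transpose_of_trivial] at this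
    have hS't : (Sg'⁻¹)ᵀ = Sg'⁻¹ := by rw [Matrix.transpose_nonsing_inv, hSg't]
    have he : (P * Cᵀ * Sg⁻¹ - P' * Cᵀ * Sg'⁻¹)ᴴ
        = Sg⁻¹ * C * P - Sg'⁻¹ * C * P' := by
      rw [conjTranspose_eq_transpose_of_trivial]
      rw [transpose_sub, transpose_mul, transpose_mul, transpose_mul,
        transpose_mul, hSt, hS't, transpose_transpose, hPt, hP't]
      simp only [Matrix.mul_assoc]
    rwa [he] at h
  exact hpsd1.add hpsd2
end

section
/- If the initial estimation error covariance satisfies P̃'₀⁻ ⪯ P̃₀⁻, then the Kalman filter recursion (prior update P̃k⁻ = A P̃_{k−1} A^T + G G^T, posterior update P̃k = P̃k⁻ − P̃k⁻ C^T (C P̃k⁻ C^T + D D^T)⁻¹ C P̃k⁻) preserves the ordering: P̃'ₖ⁻ ⪯ P̃ₖ⁻ and P̃'ₖ ⪯ P̃ₖ for all k = 0, …, N. -/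
open Matrix

private lemma psd_conj {k l : ℕ} {A : Matrix (Fin l) (Fin l) ℝ} (hA : A.PosSemidef)
    (B : Matrix (Fin k) (Fin l) ℝ) : (B * A * Bᵀ).PosSemidef := by
  have := hA.mul_mul_conjTranspose_same B
  rwa [conjTranspose_eq_transpose_of_trivial] at this

private lemma psd_self {k l : ℕ} (B : Matrix (Fin k) (Fin l) ℝ) : (B * Bᵀ).PosSemidef := by
  have := psd_conj (Matrix.PosSemidef.one (n := Fin l) (R := ℝ)) B
  simpa using this

private lemma symm_of_psd {l : ℕ} {A : Matrix (Fin l) (Fin l) ℝ} (hA : A.PosSemidef) :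
    Aᵀ = A := by
  have h := hA.isHermitian
  rwa [Matrix.IsHermitian, conjTranspose_eq_transpose_of_trivial] at h

/-- Representation of the posterior update as a manifestly PSD expression. -/
private lemma f_repr {n m : ℕ} (C : Matrix (Fin m) (Fin n) ℝ) (R : Matrix (Fin m) (Fin m) ℝ)
    (hR : R.PosDef) (P : Matrix (Fin n) (Fin n) ℝ) (hP : P.PosSemidef) :
    P - P * Cᵀ * (C * P * Cᵀ + R)⁻¹ * C * P =
      (1 - P * Cᵀ * (C * P * Cᵀ + R)⁻¹ * C) * P * (1 - P * Cᵀ * (C * P * Cᵀ + R)⁻¹ * C)ᵀ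
        + (P * Cᵀ * (C * P * Cᵀ + R)⁻¹) * R * (P * Cᵀ * (C * P * Cᵀ + R)⁻¹)ᵀ := by
  have hPt : Pᵀ = P := symm_of_psd hP
  set S := C * P * Cᵀ + R with hS
  have hSpd : S.PosDef := Matrix.PosDef.posSemidef_add (psd_conj hP C) hR
  have hdet : IsUnit S.det := (Matrix.isUnit_iff_isUnit_det S).mp hSpd.isUnit
  have hSt : Sᵀ = S := symm_of_psd hSpd.posSemidef
  have hQt : S⁻¹ᵀ = S⁻¹ := by rw [Matrix.transpose_nonsing_inv, hSt]
  have hKt : (P * Cᵀ * S⁻¹)ᵀ = S⁻¹ * (C * P) := by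
    simp [Matrix.transpose_mul, hQt, hPt, Matrix.mul_assoc]
  have h1 : (1 - P * Cᵀ * S⁻¹ * C)ᵀ = 1 - Cᵀ * (S⁻¹ * (C * P)) := by
    rw [Matrix.transpose_sub, Matrix.transpose_mul, hKt, Matrix.transpose_one]
  rw [h1, hKt]
  have expand : (1 - P * Cᵀ * S⁻¹ * C) * P * (1 - Cᵀ * (S⁻¹ * (C * P)))
      + P * Cᵀ * S⁻¹ * R * (S⁻¹ * (C * P))
      = P - (P * Cᵀ * S⁻¹) * (C * P) - P * Cᵀ * (S⁻¹ * (C * P))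
        + (P * Cᵀ * S⁻¹ * (C * P * Cᵀ + R)) * (S⁻¹ * (C * P)) := by
    simp only [Matrix.mul_sub, Matrix.sub_mul, Matrix.mul_add, Matrix.add_mul,
      Matrix.mul_assoc, Matrix.mul_one, Matrix.one_mul]
    abel
  have hKS : P * Cᵀ * S⁻¹ * (C * P * Cᵀ + R) = P * Cᵀ := by
    rw [← hS]; exact Matrix.nonsing_inv_mul_cancel_right S (P * Cᵀ) hdet
  rw [expand, hKS]
  simp only [Matrix.mul_assoc]
  abel

/-- One Kalman posterior step preserves PSD-ness and the Loewner order. -/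
private lemma kalman_step {n m : ℕ} (C : Matrix (Fin m) (Fin n) ℝ)
    (R : Matrix (Fin m) (Fin m) ℝ) (hR : R.PosDef)
    (P P' : Matrix (Fin n) (Fin n) ℝ)
    (hP : P.PosSemidef) (hP' : P'.PosSemidef) (hle : (P - P').PosSemidef) :
    (P - P * Cᵀ * (C * P * Cᵀ + R)⁻¹ * C * P).PosSemidef ∧
    (P' - P' * Cᵀ * (C * P' * Cᵀ + R)⁻¹ * C * P').PosSemidef ∧
    ((P - P * Cᵀ * (C * P * Cᵀ + R)⁻¹ * C * P) -
      (P' - P' * Cᵀ * (C * P' * Cᵀ + R)⁻¹ * C * P')).PosSemidef := by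
  have hPt : Pᵀ = P := symm_of_psd hP
  have hP't : P'ᵀ = P' := symm_of_psd hP'
  set S := C * P * Cᵀ + R with hS
  set S' := C * P' * Cᵀ + R with hS'
  set K := P * Cᵀ * S⁻¹ with hK
  set K' := P' * Cᵀ * S'⁻¹ with hK'
  have hS'pd : S'.PosDef := Matrix.PosDef.posSemidef_add (psd_conj hP' C) hR
  have hdet' : IsUnit S'.det := (Matrix.isUnit_iff_isUnit_det S').mp hS'pd.isUnit
  have hS't : S'ᵀ = S' := symm_of_psd hS'pd.posSemidef
  have hQ't : S'⁻¹ᵀ = S'⁻¹ := by rw [Matrix.transpose_nonsing_inv, hS't]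
  have hK't : K'ᵀ = S'⁻¹ * (C * P') := by
    rw [hK']; simp [Matrix.transpose_mul, hQ't, hP't, Matrix.mul_assoc]
  have reprP := f_repr C R hR P hP
  have reprP' := f_repr C R hR P' hP'
  rw [← hS, ← hK] at reprP
  rw [← hS', ← hK'] at reprP'
  -- PSD of the two posterior updates
  have psdf : (P - K * C * P).PosSemidef := by
    have h := (psd_conj hP (1 - K * C)).add (psd_conj hR.posSemidef K)
    rw [← reprP] at h
    exact h
  have psdf' : (P' - K' * C * P').PosSemidef := by
    have h := (psd_conj hP' (1 - K' * C)).add (psd_conj hR.posSemidef K')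
    rw [← reprP'] at h
    exact h
  -- key algebraic facts about the optimal gain for `P'`
  have hK'S : K' * S' = P' * Cᵀ := by
    rw [hK']; exact Matrix.nonsing_inv_mul_cancel_right S' (P' * Cᵀ) hdet'
  have hS'K't : S' * K'ᵀ = C * P' := by
    rw [hK't, ← Matrix.mul_assoc, Matrix.mul_nonsing_inv S' hdet', Matrix.one_mul]
  -- the main difference identity
  have diff : (P - K * C * P) - (P' - K' * C * P')
      = (1 - K * C) * (P - P') * (1 - K * C)ᵀ + (K - K') * S' * (K - K')ᵀ := by
    rw [reprP]
    have hKCt : (1 - K * C)ᵀ = 1 - Cᵀ * Kᵀ := by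
      rw [Matrix.transpose_sub, Matrix.transpose_mul, Matrix.transpose_one]
    have hKKt : (K - K')ᵀ = Kᵀ - K'ᵀ := Matrix.transpose_sub _ _
    rw [hKCt, hKKt]
    have e0 : (K - K') * S' * (Kᵀ - K'ᵀ)
        = K * S' * Kᵀ - K * (S' * K'ᵀ) - (K' * S') * Kᵀ + K' * (S' * K'ᵀ) := by
      simp only [Matrix.sub_mul, Matrix.mul_sub, Matrix.mul_assoc]
      abel
    rw [e0, hS'K't, hK'S, hS']
    simp only [Matrix.mul_sub, Matrix.sub_mul, Matrix.mul_add, Matrix.add_mul,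
      Matrix.mul_assoc, Matrix.mul_one, Matrix.one_mul]
    abel
  have psddiff : ((P - K * C * P) - (P' - K' * C * P')).PosSemidef := by
    rw [diff]
    exact (psd_conj hle (1 - K * C)).add (psd_conj hS'pd.posSemidef (K - K'))
  exact ⟨psdf, psdf', psddiff⟩

/-- The Kalman filter covariance recursion preserves the Loewner order
of initial error covariances, at every step `k ≤ N`, both for prior and
posterior covariances. -/
theorem kalman_recursion_monotone {n m : ℕ} (N : ℕ)
    (A G : Matrix (Fin n) (Fin n) ℝ)
    (C : Matrix (Fin m) (Fin n) ℝ) (D : Matrix (Fin m) (Fin m) ℝ)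
    (hD : (D * Dᵀ).PosDef)
    (Pp Pp' Po Po' : ℕ → Matrix (Fin n) (Fin n) ℝ)
    (h0 : (Pp 0).PosSemidef) (h0' : (Pp' 0).PosSemidef)
    (hinit : (Pp 0 - Pp' 0).PosSemidef)
    (hpost : ∀ k, Po k =
      Pp k - Pp k * Cᵀ * (C * Pp k * Cᵀ + D * Dᵀ)⁻¹ * C * Pp k)
    (hpost' : ∀ k, Po' k =
      Pp' k - Pp' k * Cᵀ * (C * Pp' k * Cᵀ + D * Dᵀ)⁻¹ * C * Pp' k)
    (hprior : ∀ k, Pp (k + 1) = A * Po k * Aᵀ + G * Gᵀ)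
    (hprior' : ∀ k, Pp' (k + 1) = A * Po' k * Aᵀ + G * Gᵀ) :
    ∀ k ≤ N, (Pp k - Pp' k).PosSemidef ∧ (Po k - Po' k).PosSemidef := by
  have key : ∀ k, (Pp k).PosSemidef ∧ (Pp' k).PosSemidef ∧ (Pp k - Pp' k).PosSemidef ∧
      (Po k).PosSemidef ∧ (Po' k).PosSemidef ∧ (Po k - Po' k).PosSemidef := by
    intro k
    induction k with
    | zero =>
      obtain ⟨a, b, c⟩ := kalman_step C (D * Dᵀ) hD (Pp 0) (Pp' 0) h0 h0' hinit
      rw [← hpost 0] at a c; rw [← hpost' 0] at b c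
      exact ⟨h0, h0', hinit, a, b, c⟩
    | succ k ih =>
      obtain ⟨_, _, _, hPo, hPo', hPod⟩ := ih
      have hp : (Pp (k + 1)).PosSemidef := by
        rw [hprior k]; exact (psd_conj hPo A).add (psd_self G)
      have hp' : (Pp' (k + 1)).PosSemidef := by
        rw [hprior' k]; exact (psd_conj hPo' A).add (psd_self G)
      have hpd : (Pp (k + 1) - Pp' (k + 1)).PosSemidef := by
        rw [hprior k, hprior' k]
        have e : A * Po k * Aᵀ + G * Gᵀ - (A * Po' k * Aᵀ + G * Gᵀ)
            = A * (Po k - Po' k) * Aᵀ := by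
          simp only [Matrix.mul_sub, Matrix.sub_mul]
          abel
        rw [e]
        exact psd_conj hPod A
      obtain ⟨a, b, c⟩ := kalman_step C (D * Dᵀ) hD (Pp (k + 1)) (Pp' (k + 1)) hp hp' hpd
      rw [← hpost (k + 1)] at a c; rw [← hpost' (k + 1)] at b c
      exact ⟨hp, hp', hpd, a, b, c⟩
  intro k _
  exact ⟨(key k).2.2.1, (key k).2.2.2.2.2⟩
end
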